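/- Suppose $\beta_n\in(0,1)$ for all $n$, $(\beta_n)\in\mathcal{GS}(-\beta)$ with $\beta\in(1/2,1]$, and $\xi=\lim_{n\to\infty}(n\beta_n)^{-1}$ exists and is finite. Then with $Q_n=\prod_{j=1}^n(1-\beta_j)$ and any $m>0$ with $m>0$ (taking $v_n\equiv 1$, $v^*=0$), $\lim_{n\to\infty} Q_n^m\sum_{k=1}^n Q_k^{-m}\beta_k = \frac{1}{m}$; in particular $Q_n\to 0$. -/

import Mathlib

open Filter Finset Real

def GS (γ : ℝ) (v : ℕ → ℝ) : Prop :=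
  (∀ n, 0 < v n) ∧
    Tendsto (fun n : ℕ => (n : ℝ) * (1 - v (n - 1) / v n)) atTop (nhds γ)

private lemma one_add_sum_le_prod' (s : Finset ℕ) (x : ℕ → ℝ) (hx : ∀ i ∈ s, 0 ≤ x i) :
    1 + ∑ i ∈ s, x i ≤ ∏ i ∈ s, (1 + x i) := by
  classical
  induction s using Finset.cons_induction with
  | empty => simp
  | cons a s ha ih =>
    have hxa : 0 ≤ x a := hx a (Finset.mem_cons_self a s)
    have hxs : ∀ i ∈ s, 0 ≤ x i := fun i hi => hx i (Finset.mem_cons.2 (Or.inr hi))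
    have ih' := ih hxs
    have hsum : 0 ≤ ∑ i ∈ s, x i := Finset.sum_nonneg hxs
    rw [Finset.sum_cons, Finset.prod_cons]
    nlinarith [mul_le_mul_of_nonneg_left ih' (by linarith : (0:ℝ) ≤ 1 + x a)]

private lemma sum_Ioc_telescope (f : ℕ → ℝ) {N n : ℕ} (h : N ≤ n) :
    ∑ k ∈ Finset.Ioc N n, (f k - f (k - 1)) = f n - f N := by
  induction n, h using Nat.le_induction with
  | base => simp
  | succ n hn ih =>
    rw [Finset.sum_Ioc_succ_top hn, ih]
    simp

private lemma harmonic_Ioc_atTop :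
    Tendsto (fun n : ℕ => ∑ k ∈ Finset.Ioc 0 n, (1 : ℝ) / k) atTop atTop := by
  have heq : ∀ n : ℕ, ∑ k ∈ Finset.Ioc 0 n, (1 : ℝ) / k
      = ∑ i ∈ Finset.range n, (1 : ℝ) / (i + 1) := by
    intro n
    have : Finset.Ioc 0 n = Finset.Ico 1 (n + 1) := by
      ext k; simp only [Finset.mem_Ioc, Finset.mem_Ico]; omega
    rw [this, Finset.sum_Ico_eq_sum_range]
    simp only [Nat.add_sub_cancel]
    refine Finset.sum_congr rfl fun i _ => ?_
    push_cast
    ring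
  simp only [heq]
  exact Real.tendsto_sum_range_one_div_nat_succ_atTop

set_option maxHeartbeats 1600000 in
theorem lemma1_special_case (β : ℕ → ℝ) (b ξ m : ℝ)
    (hβ : GS (-b) β) (hb : b ∈ Set.Ioc (1/2 : ℝ) 1)
    (hβ01 : ∀ n, β n ∈ Set.Ioo (0 : ℝ) 1)
    (hξ : Tendsto (fun n : ℕ => ((n : ℝ) * β n)⁻¹) atTop (nhds ξ))
    (hm : 0 < m)
    (Q : ℕ → ℝ) (hQ : ∀ n, Q n = ∏ j ∈ Icc 1 n, (1 - β j)) :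
    Tendsto (fun n : ℕ => Q n ^ m * ∑ k ∈ Icc 1 n, Q k ^ (-m) * β k)
        atTop (nhds (1 / m)) ∧
      Tendsto Q atTop (nhds 0) := by
  obtain ⟨hb2, hb1⟩ := hb
  have hbpos : 0 < b := by linarith
  have hβpos : ∀ n, 0 < β n := fun n => (hβ01 n).1
  have hβlt : ∀ n, β n < 1 := fun n => (hβ01 n).2
  have h1β : ∀ n, (0:ℝ) < 1 - β n := fun n => by linarith [hβlt n]
  have hQpos : ∀ n, 0 < Q n := by
    intro n; rw [hQ]; exact Finset.prod_pos fun j _ => h1β j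
  -- harmonic sums
  set H : ℕ → ℝ := fun n => ∑ k ∈ Finset.Ioc 0 n, (1 : ℝ) / k with hH
  have hHatTop : Tendsto H atTop atTop := harmonic_Ioc_atTop
  have hHsplit : ∀ {N n : ℕ}, N ≤ n →
      ∑ k ∈ Finset.Ioc N n, (1 : ℝ) / k = H n - H N := by
    intro N n h
    have := Finset.sum_Ioc_consecutive (fun k : ℕ => (1:ℝ)/k) (Nat.zero_le N) h
    simp only [hH]
    linarith [this]
  -- Step 1 : β → 0
  have hβ0 : Tendsto β atTop (nhds 0) := by
    have hev : ∀ᶠ n : ℕ in atTop, (n:ℝ) * (1 - β (n-1) / β n) < -b/2 :=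
      hβ.2.eventually (eventually_lt_nhds (by linarith))
    obtain ⟨N₀, hN₀⟩ := eventually_atTop.mp hev
    set N := max N₀ 1 with hNdef
    have hkey : ∀ k, N < k → β k * (1 + b/(2*(k:ℝ))) ≤ β (k-1) := by
      intro k hk
      have hk1 : 1 ≤ k := by omega
      have h := hN₀ k (by omega)
      have hkpos : (0:ℝ) < (k:ℝ) := by exact_mod_cast Nat.pos_of_ne_zero (by omega)
      have h2 : b/(2*(k:ℝ)) < β (k-1)/β k - 1 := by
        rw [div_lt_iff₀ (by positivity : (0:ℝ) < 2*(k:ℝ))]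
        nlinarith [h]
      have h3 : (1 + b/(2*(k:ℝ))) * β k ≤ (β (k-1)/β k) * β k :=
        mul_le_mul_of_nonneg_right (by linarith) (hβpos k).le
      have h4 : (β (k-1)/β k) * β k = β (k-1) := div_mul_cancel₀ _ (hβpos k).ne'
      nlinarith [h3, h4]
    have hclaim : ∀ n, N ≤ n →
        β n * ∏ k ∈ Finset.Ioc N n, (1 + b/(2*(k:ℝ))) ≤ β N := by
      intro n hn
      induction n, hn using Nat.le_induction with
      | base => simp
      | succ n hn ih =>
        rw [Finset.prod_Ioc_succ_top hn]
        have h1 := hkey (n+1) (by omega)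
        simp only [Nat.add_sub_cancel] at h1
        have hPpos : (0:ℝ) ≤ ∏ k ∈ Finset.Ioc N n, (1 + b/(2*(k:ℝ))) :=
          Finset.prod_nonneg fun k _ => by positivity
        have h2 := mul_le_mul_of_nonneg_right h1 hPpos
        calc β (n+1) * ((∏ k ∈ Finset.Ioc N n, (1 + b/(2*(k:ℝ)))) * (1 + b/(2*((n+1:ℕ):ℝ))))
            = (β (n+1) * (1 + b/(2*((n+1:ℕ):ℝ)))) * ∏ k ∈ Finset.Ioc N n, (1 + b/(2*(k:ℝ))) := by
              ring
          _ ≤ β n * ∏ k ∈ Finset.Ioc N n, (1 + b/(2*(k:ℝ))) := h2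
          _ ≤ β N := ih
    -- bound : for n ≥ N, β n ≤ β N / (1 + (b/2) * (H n - H N))
    have hbound : ∀ n, N ≤ n → β n ≤ β N / (1 + (b/2) * (H n - H N)) := by
      intro n hn
      have hsum : ∑ k ∈ Finset.Ioc N n, b/(2*(k:ℝ))
          = (b/2) * (H n - H N) := by
        rw [← hHsplit hn, Finset.mul_sum]
        refine Finset.sum_congr rfl fun k hk => ?_
        have hk1 : 1 ≤ k := by
          have := (Finset.mem_Ioc.1 hk).1; omega
        have : (k:ℝ) ≠ 0 := by exact_mod_cast Nat.pos_of_ne_zero (by omega) |>.ne'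
        field_simp
      have hprodge : 1 + (b/2) * (H n - H N)
          ≤ ∏ k ∈ Finset.Ioc N n, (1 + b/(2*(k:ℝ))) := by
        rw [← hsum]
        exact one_add_sum_le_prod' _ _ fun k hk => by positivity
      have hHge : 0 ≤ H n - H N := by
        rw [← hHsplit hn]
        exact Finset.sum_nonneg fun k _ => by positivity
      have hDpos : 0 < 1 + (b/2) * (H n - H N) := by nlinarith
      rw [le_div_iff₀ hDpos]
      calc β n * (1 + (b/2) * (H n - H N))
          ≤ β n * ∏ k ∈ Finset.Ioc N n, (1 + b/(2*(k:ℝ))) :=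
            mul_le_mul_of_nonneg_left hprodge (hβpos n).le
        _ ≤ β N := hclaim n hn
    have hD : Tendsto (fun n => β N / (1 + (b/2) * (H n - H N))) atTop (nhds 0) := by
      apply Tendsto.div_atTop tendsto_const_nhds
      apply tendsto_atTop_add_const_left
      apply Tendsto.const_mul_atTop (by positivity : (0:ℝ) < b/2)
      simpa [sub_eq_add_neg] using tendsto_atTop_add_const_right atTop (-H N) hHatTop
    refine squeeze_zero' (Eventually.of_forall fun n => (hβpos n).le) ?_ hD
    filter_upwards [eventually_ge_atTop N] with n hn using hbound n hn
  -- Step 2 : Q → 0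
  have hQ0 : Tendsto Q atTop (nhds 0) := by
    have hξ0 : 0 ≤ ξ := by
      refine ge_of_tendsto' hξ fun n => ?_
      exact inv_nonneg.2 (mul_nonneg (Nat.cast_nonneg n) (hβpos n).le)
    have hev : ∀ᶠ n : ℕ in atTop, ((n:ℝ) * β n)⁻¹ < ξ + 1 :=
      hξ.eventually (eventually_lt_nhds (by linarith))
    obtain ⟨M₀, hM₀⟩ := eventually_atTop.mp hev
    set M := max M₀ 1 with hMdef
    have hβlow : ∀ k, M < k → (ξ+1)⁻¹ * ((1:ℝ)/k) ≤ β k := by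
      intro k hk
      have h := hM₀ k (by omega)
      have hkpos : (0:ℝ) < (k:ℝ) := by exact_mod_cast Nat.pos_of_ne_zero (by omega)
      have hnb : (0:ℝ) < (k:ℝ) * β k := mul_pos hkpos (hβpos k)
      have h2 : (ξ+1)⁻¹ < (k:ℝ) * β k := by
        have := inv_strictAnti₀ (inv_pos.2 hnb) h
        rwa [inv_inv] at this
      rw [div_eq_mul_inv, one_mul, ← div_eq_mul_inv, div_le_iff₀ hkpos]
      nlinarith
    set T : ℕ → ℝ := fun n => ∑ k ∈ Icc 1 n, β k with hT
    have hTatTop : Tendsto T atTop atTop := by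
      have hlow : ∀ n, M ≤ n → (ξ+1)⁻¹ * (H n - H M) ≤ T n := by
        intro n hn
        have h1 : T n = ∑ k ∈ Finset.Ioc 0 n, β k := by
          simp only [hT]
          congr 1
        have h2 : ∑ k ∈ Finset.Ioc 0 n, β k
            = ∑ k ∈ Finset.Ioc 0 M, β k + ∑ k ∈ Finset.Ioc M n, β k :=
          (Finset.sum_Ioc_consecutive _ (Nat.zero_le M) hn).symm
        have h3 : (ξ+1)⁻¹ * (H n - H M) ≤ ∑ k ∈ Finset.Ioc M n, β k := by
          rw [← hHsplit hn, Finset.mul_sum]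
          refine Finset.sum_le_sum fun k hk => ?_
          exact hβlow k (Finset.mem_Ioc.1 hk).1
        have h4 : 0 ≤ ∑ k ∈ Finset.Ioc 0 M, β k :=
          Finset.sum_nonneg fun k _ => (hβpos k).le
        rw [h1, h2]; linarith
      have hlim : Tendsto (fun n => (ξ+1)⁻¹ * (H n - H M)) atTop atTop := by
        apply Tendsto.const_mul_atTop (inv_pos.2 (by linarith : (0:ℝ) < ξ+1))
        simpa [sub_eq_add_neg] using tendsto_atTop_add_const_right atTop (-H M) hHatTop
      apply tendsto_atTop_mono' atTop _ hlim
      filter_upwards [eventually_ge_atTop M] with n hn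
      exact hlow n hn
    have hQle : ∀ n, Q n ≤ Real.exp (-T n) := by
      intro n
      have hTn : -T n = ∑ k ∈ Icc 1 n, (-β k) := by simp [hT]
      rw [hQ, hTn, Real.exp_sum]
      refine Finset.prod_le_prod (fun j _ => (h1β j).le) fun j _ => ?_
      have := Real.add_one_le_exp (-β j)
      linarith
    have hexp : Tendsto (fun n => Real.exp (-T n)) atTop (nhds 0) :=
      Real.tendsto_exp_atBot.comp (tendsto_neg_atTop_atBot.comp hTatTop)
    exact squeeze_zero (fun n => (hQpos n).le) hQle hexp
  refine ⟨?_, hQ0⟩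
  -- Step 3 : main limit
  set g : ℕ → ℝ := fun k => (1 - (1 - β k) ^ m) / β k with hgdef
  have hgm : Tendsto g atTop (nhds m) := by
    have hd1 : HasDerivAt (fun x : ℝ => 1 - x) (-1) 0 := (hasDerivAt_id 0).const_sub 1
    have hd2 : HasDerivAt (fun y : ℝ => y ^ m) (m * (1:ℝ) ^ (m - 1)) ((1:ℝ) - 0) := by
      simpa using Real.hasDerivAt_rpow_const (x := (1:ℝ)) (p := m) (Or.inl one_ne_zero)
    have hd3 : HasDerivAt (fun x : ℝ => (1 - x) ^ m) ((m * (1:ℝ) ^ (m-1)) * (-1)) 0 :=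
      HasDerivAt.comp 0 hd2 hd1
    have hd4 : HasDerivAt (fun x : ℝ => 1 - (1 - x) ^ m) m 0 := by
      have := hd3.const_sub 1
      simpa [Real.one_rpow] using this
    have hslope := hasDerivAt_iff_tendsto_slope.mp hd4
    have hβne : Tendsto β atTop (nhdsWithin (0:ℝ) {(0:ℝ)}ᶜ) :=
      tendsto_nhdsWithin_of_tendsto_nhds_of_eventually_within β hβ0
        (Eventually.of_forall fun n => (hβpos n).ne')
    have hcomp := hslope.comp hβne
    refine hcomp.congr fun n => ?_
    simp only [Function.comp_apply, slope_def_field]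
    rw [hgdef]
    simp [Real.one_rpow]
  set R : ℕ → ℝ := fun k => Q k ^ (-m) with hRdef
  have hRpos : ∀ k, 0 < R k := fun k => Real.rpow_pos_of_pos (hQpos k) _
  have hrec : ∀ j : ℕ, Q (j+1) = Q j * (1 - β (j+1)) := by
    intro j
    rw [hQ, hQ, Finset.prod_Icc_succ_top (Nat.succ_le_succ (Nat.zero_le j))]
  have hRrec : ∀ j : ℕ, R (j+1) - R j = R (j+1) * β (j+1) * g (j+1) := by
    intro j
    have hc : (0:ℝ) < 1 - β (j+1) := h1β _
    have h1 : R (j+1) = R j * (1 - β (j+1)) ^ (-m) := by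
      simp only [hRdef]
      rw [hrec j, Real.mul_rpow (hQpos j).le hc.le]
    have h2 : (1 - β (j+1)) ^ (-m) * (1 - β (j+1)) ^ m = 1 := by
      rw [← Real.rpow_add hc]; simp
    have h3 : β (j+1) * g (j+1) = 1 - (1 - β (j+1)) ^ m := by
      simp only [hgdef]
      rw [mul_comm]
      exact div_mul_cancel₀ _ (hβpos (j+1)).ne'
    rw [h1]
    linear_combination (-(R j * (1 - β (j+1)) ^ (-m))) * h3 + R j * h2
  set S : ℕ → ℝ := fun n => ∑ k ∈ Icc 1 n, R k * β k with hSdef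
  have hPm : Tendsto (fun n => Q n ^ m) atTop (nhds 0) := by
    have hc : ContinuousAt (fun x : ℝ => x ^ m) 0 :=
      Real.continuousAt_rpow_const 0 m (Or.inr hm.le)
    have := hc.tendsto.comp hQ0
    simpa [Real.zero_rpow hm.ne', Function.comp_def] using this
  have hPR1 : ∀ n, Q n ^ m * R n = 1 := by
    intro n
    simp only [hRdef]
    rw [← Real.rpow_add (hQpos n)]
    simp
  rw [Metric.tendsto_atTop]
  intro ε hε
  set ε' : ℝ := min (1/2) (m * ε / 4) with hε'def
  have hε'pos : 0 < ε' := by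
    apply lt_min (by norm_num)
    positivity
  have hε'le : ε' ≤ 1/2 := min_le_left _ _
  have hε'le2 : ε' ≤ m * ε / 4 := min_le_right _ _
  set c₁ : ℝ := m * (1 - ε') with hc₁def
  set c₂ : ℝ := m * (1 + ε') with hc₂def
  have hc₁pos : 0 < c₁ := by
    apply mul_pos hm; linarith
  have hc₂pos : 0 < c₂ := by
    apply mul_pos hm; linarith
  -- choose N where g is within bounds
  have hgev : ∀ᶠ k in atTop, c₁ ≤ g k ∧ g k ≤ c₂ := by
    filter_upwards [hgm.eventually (eventually_gt_nhds (show c₁ < m by nlinarith)),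
      hgm.eventually (eventually_lt_nhds (show m < c₂ by nlinarith))] with k h1 h2
    exact ⟨h1.le, h2.le⟩
  obtain ⟨N, hN⟩ := eventually_atTop.mp hgev
  -- telescoping identity and bounds for n ≥ N
  have hsandwich : ∀ n, N ≤ n →
      c₁ * (S n - S N) ≤ R n - R N ∧ R n - R N ≤ c₂ * (S n - S N) := by
    intro n hn
    have htel : R n - R N = ∑ k ∈ Finset.Ioc N n, (R k - R (k-1)) :=
      (sum_Ioc_telescope R hn).symm
    have hterm : ∀ k ∈ Finset.Ioc N n, R k - R (k-1) = R k * β k * g k := by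
      intro k hk
      obtain ⟨hk1, _⟩ := Finset.mem_Ioc.1 hk
      obtain ⟨j, rfl⟩ : ∃ j, k = j + 1 := ⟨k - 1, by omega⟩
      simpa using hRrec j
    have hSsplit : S n - S N = ∑ k ∈ Finset.Ioc N n, R k * β k := by
      have h0 : ∀ p : ℕ, S p = ∑ k ∈ Finset.Ioc 0 p, R k * β k := by
        intro p; simp only [hSdef]; congr 1
      rw [h0, h0]
      have := Finset.sum_Ioc_consecutive (fun k => R k * β k) (Nat.zero_le N) hn
      linarith
    rw [htel, Finset.sum_congr rfl hterm, hSsplit, Finset.mul_sum, Finset.mul_sum]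
    constructor
    · refine Finset.sum_le_sum fun k hk => ?_
      have hb := (hN k (le_of_lt (Finset.mem_Ioc.1 hk).1)).1
      have hpos : 0 < R k * β k := mul_pos (hRpos k) (hβpos k)
      calc c₁ * (R k * β k) = (R k * β k) * c₁ := by ring
        _ ≤ (R k * β k) * g k := mul_le_mul_of_nonneg_left hb hpos.le
        _ = R k * β k * g k := by ring
    · refine Finset.sum_le_sum fun k hk => ?_
      have hb := (hN k (le_of_lt (Finset.mem_Ioc.1 hk).1)).2
      have hpos : 0 < R k * β k := mul_pos (hRpos k) (hβpos k)
      calc R k * β k * g k ≤ (R k * β k) * c₂ := mul_le_mul_of_nonneg_left hb hpos.le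
        _ = c₂ * (R k * β k) := by ring
  -- limits of the bounding sequences
  have hA : Tendsto (fun n => Q n ^ m * S N) atTop (nhds 0) := by
    simpa using hPm.mul_const (S N)
  have hB : Tendsto (fun n => Q n ^ m * R N) atTop (nhds 0) := by
    simpa using hPm.mul_const (R N)
  have hL : Tendsto (fun n => Q n ^ m * S N + (1 - Q n ^ m * R N) / c₂)
      atTop (nhds (1 / c₂)) := by
    have : Tendsto (fun n => (1 - Q n ^ m * R N) / c₂) atTop (nhds ((1 - 0)/c₂)) :=
      ((tendsto_const_nhds.sub hB)).div_const c₂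
    simpa using hA.add this
  have hU : Tendsto (fun n => Q n ^ m * S N + (1 - Q n ^ m * R N) / c₁)
      atTop (nhds (1 / c₁)) := by
    have : Tendsto (fun n => (1 - Q n ^ m * R N) / c₁) atTop (nhds ((1 - 0)/c₁)) :=
      ((tendsto_const_nhds.sub hB)).div_const c₁
    simpa using hA.add this
  -- numeric bounds on the limits
  have hclose₂ : 1/m - ε < 1/c₂ := by
    rw [lt_div_iff₀ hc₂pos, hc₂def]
    nlinarith [one_div_mul_cancel hm.ne', mul_pos hε hm, hε'pos, hε'le2,
      mul_pos (mul_pos hε hm) hε'pos]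
  have hclose₁ : 1/c₁ < 1/m + ε := by
    rw [div_lt_iff₀ hc₁pos, hc₁def]
    nlinarith [one_div_mul_cancel hm.ne', mul_pos hε hm, hε'pos, hε'le2, hε'le,
      mul_pos (mul_pos hε hm) hε'pos]
  have hLev := hL.eventually (eventually_gt_nhds hclose₂)
  have hUev := hU.eventually (eventually_lt_nhds hclose₁)
  rw [eventually_atTop] at hLev hUev
  obtain ⟨N₁, hN₁⟩ := hLev
  obtain ⟨N₂, hN₂⟩ := hUev
  refine ⟨max N (max N₁ N₂), fun n hn => ?_⟩
  have hnN : N ≤ n := le_trans (le_max_left _ _) hn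
  have hn1 : N₁ ≤ n := le_trans (le_trans (le_max_left _ _) (le_max_right N _)) hn
  have hn2 : N₂ ≤ n := le_trans (le_trans (le_max_right _ _) (le_max_right N _)) hn
  obtain ⟨hlow, hhigh⟩ := hsandwich n hnN
  have hPpos : 0 < Q n ^ m := Real.rpow_pos_of_pos (hQpos n) m
  -- multiply the sandwich by Q n ^ m
  have hlow' := mul_le_mul_of_nonneg_left hlow hPpos.le
  have hhigh' := mul_le_mul_of_nonneg_left hhigh hPpos.le
  have hid : Q n ^ m * (R n - R N) = 1 - Q n ^ m * R N := by
    rw [mul_sub, hPR1 n]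
  rw [hid] at hlow' hhigh'
  -- extract bounds on f n := Q n ^ m * S n
  have hfl : Q n ^ m * S N + (1 - Q n ^ m * R N) / c₂ ≤ Q n ^ m * S n := by
    have h' : (1 - Q n ^ m * R N) / c₂ ≤ Q n ^ m * S n - Q n ^ m * S N := by
      rw [div_le_iff₀ hc₂pos]
      linarith [hhigh']
    linarith
  have hfu : Q n ^ m * S n ≤ Q n ^ m * S N + (1 - Q n ^ m * R N) / c₁ := by
    have h' : Q n ^ m * S n - Q n ^ m * S N ≤ (1 - Q n ^ m * R N) / c₁ := by
      rw [le_div_iff₀ hc₁pos]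
      linarith [hlow']
    linarith
  have hl := hN₁ n hn1
  have hu := hN₂ n hn2
  rw [Real.dist_eq, abs_sub_lt_iff]
  exact ⟨by linarith [hfu, hu], by linarith [hfl, hl]⟩
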